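/- Let (M,d) be a compact metric space, L > 0, and let S be a set of L-Lipschitz curves ℝ → M, equipped with the metric ρ. Let τ: S → ℝ be continuous with respect to ρ, and define P: S → curves by P(γ)(t) = γ(t + τ(γ)). Then P is continuous with respect to ρ: if γₙ → γ in (S,ρ), then ρ(P(γₙ), P(γ)) → 0. -/

import Mathlib

open Filter MeasureTheory intervalIntegral

/-- The metric `ρ` on the space of curves `ℝ → M`. -/
noncomputable def rho {M : Type*} [PseudoMetricSpace M] (γ₁ γ₂ : ℝ → M) : ℝ :=
  ∑' i : ℤ, (2 : ℝ) ^ (-|i|) * ∫ t in (i : ℝ)..((i : ℝ) + 1), dist (γ₁ t) (γ₂ t)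

/-- The time-one shift on curves: `F₁(γ)(t) = γ(t + 1)`. -/
def timeOneShift {M : Type*} (γ : ℝ → M) : ℝ → M := fun t => γ (t + 1)

/-- A curve `γ : ℝ → M` is `L`-Lipschitz. -/
def LipschitzCurve {M : Type*} [PseudoMetricSpace M] (L : ℝ) (γ : ℝ → M) : Prop :=
  ∀ s t : ℝ, dist (γ s) (γ t) ≤ L * |s - t|

/-- `E` is an `(n, ε)`-dense subset of `F` for the map `f` and the distance `d`:
`E ⊆ F` and the dynamical balls `{y | d_n^f(x,y) < ε}`, `x ∈ E`, cover `F`. -/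
def IsDynCover {X : Type*} (d : X → X → ℝ) (f : X → X) (F : Set X) (ε : ℝ) (n : ℕ)
    (E : Finset X) : Prop :=
  ↑E ⊆ F ∧ ∀ y ∈ F, ∃ x ∈ E, ∀ i < n, d (f^[i] x) (f^[i] y) < ε

/-- `S_d(f, ε, n)`: the minimal cardinality of an `(n, ε)`-dense subset of `F`. -/
noncomputable def coverCard {X : Type*} (d : X → X → ℝ) (f : X → X) (F : Set X) (ε : ℝ)
    (n : ℕ) : ℕ∞ :=
  ⨅ (E : Finset X) (_ : IsDynCover d f F ε n E), (E.card : ℕ∞)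

/-- The topological entropy of `f` on `F`, w.r.t. the distance `d`:
`h(f) = lim_{ε → 0⁺} limsup_{n → ∞} (1/n) log S_d(f, ε, n)`; since the inner rate is
antitone in `ε`, the limit is realized as the supremum over `ε > 0`. -/
noncomputable def topEntropy {X : Type*} (d : X → X → ℝ) (f : X → X) (F : Set X) : EReal :=
  ⨆ (ε : ℝ) (_ : (0 : ℝ) < ε),
    atTop.limsup fun n : ℕ => ENNReal.log (coverCard d f F ε n) / (n : EReal)

/-- Let `S` be a set of `L`-Lipschitz curves into a compact metric
space, and let `τ : S → ℝ` be continuous with respect to `ρ`. Then the reparametrization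
map `P(γ)(t) = γ(t + τ(γ))` is continuous on `(S, ρ)`: if `γₙ → γ` in `(S, ρ)` then
`ρ(P(γₙ), P(γ)) → 0`. -/
lemma summable_w : Summable (fun i : ℤ => (2:ℝ) ^ (-|i|)) := by
  have key : ∀ i : ℤ, (2:ℝ) ^ (-|i|) = (2⁻¹ : ℝ) ^ i.natAbs := by
    intro i
    rw [zpow_neg, inv_pow, ← zpow_natCast]
    congr 1
    rw [Int.abs_eq_natAbs]
  simp_rw [key]
  apply Summable.of_nat_of_neg
  · simpa using summable_geometric_of_lt_one (by norm_num) (by norm_num : (2⁻¹:ℝ) < 1)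
  · simpa using summable_geometric_of_lt_one (by norm_num) (by norm_num : (2⁻¹:ℝ) < 1)

lemma summable_of_le_w {f : ℤ → ℝ} (C : ℝ) (h : ∀ i, ‖f i‖ ≤ C * (2:ℝ) ^ (-|i|)) :
    Summable f :=
  Summable.of_norm_bounded (summable_w.mul_left C) h

section
set_option linter.unusedSectionVars false
variable {M : Type*} [MetricSpace M] [CompactSpace M]

noncomputable def DD (M : Type*) [MetricSpace M] : ℝ := Metric.diam (Set.univ : Set M)

lemma dist_le_DD (x y : M) : dist x y ≤ DD M :=
  Metric.dist_le_diam_of_mem isCompact_univ.isBounded (Set.mem_univ x) (Set.mem_univ y)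

lemma intInt {γ₁ γ₂ : ℝ → M} (h1 : Continuous γ₁) (h2 : Continuous γ₂) (a b : ℝ) :
    IntervalIntegrable (fun t => dist (γ₁ t) (γ₂ t)) volume a b :=
  (h1.dist h2).intervalIntegrable a b

lemma int_dist_nonneg {γ₁ γ₂ : ℝ → M} (a : ℝ) :
    0 ≤ ∫ t in a..(a+1), dist (γ₁ t) (γ₂ t) :=
  intervalIntegral.integral_nonneg (by linarith) (fun u _ => dist_nonneg)

lemma int_dist_le_DD {γ₁ γ₂ : ℝ → M} (h1 : Continuous γ₁) (h2 : Continuous γ₂) (a : ℝ) :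
    ∫ t in a..(a+1), dist (γ₁ t) (γ₂ t) ≤ DD M := by
  have := intervalIntegral.integral_mono_on (μ := volume) (by linarith : a ≤ a + 1)
    (intInt h1 h2 a (a+1)) (_root_.intervalIntegrable_const (c := DD M))
    (fun x _ => dist_le_DD (γ₁ x) (γ₂ x))
  simpa using this

/-- `Aint γ₁ γ₂ j = ∫_j^{j+1} dist (γ₁ t) (γ₂ t)`. -/
noncomputable def Aint (γ₁ γ₂ : ℝ → M) (j : ℤ) : ℝ :=
  ∫ t in (j:ℝ)..((j:ℝ)+1), dist (γ₁ t) (γ₂ t)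

lemma Aint_nonneg (γ₁ γ₂ : ℝ → M) (j : ℤ) : 0 ≤ Aint γ₁ γ₂ j := int_dist_nonneg _

lemma Aint_le_DD {γ₁ γ₂ : ℝ → M} (h1 : Continuous γ₁) (h2 : Continuous γ₂) (j : ℤ) :
    Aint γ₁ γ₂ j ≤ DD M := int_dist_le_DD h1 h2 _

lemma rho_eq_tsum_Aint (γ₁ γ₂ : ℝ → M) :
    rho γ₁ γ₂ = ∑' i : ℤ, (2:ℝ) ^ (-|i|) * Aint γ₁ γ₂ i := rfl

lemma summable_rho {γ₁ γ₂ : ℝ → M} (h1 : Continuous γ₁) (h2 : Continuous γ₂) :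
    Summable (fun i : ℤ => (2:ℝ) ^ (-|i|) * ∫ t in (i:ℝ)..((i:ℝ)+1), dist (γ₁ t) (γ₂ t)) := by
  apply summable_of_le_w (DD M)
  intro i
  rw [Real.norm_eq_abs, abs_of_nonneg (mul_nonneg (by positivity) (int_dist_nonneg _)),
    mul_comm (DD M)]
  exact mul_le_mul_of_nonneg_left (int_dist_le_DD h1 h2 _) (by positivity)

lemma summable_shiftA {γ₁ γ₂ : ℝ → M} (h1 : Continuous γ₁) (h2 : Continuous γ₂) (c : ℤ) :
    Summable (fun i : ℤ => (2:ℝ) ^ (-|i|) * Aint γ₁ γ₂ (i + c)) := by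
  apply summable_of_le_w (DD M)
  intro i
  rw [Real.norm_eq_abs, abs_of_nonneg (mul_nonneg (by positivity) (Aint_nonneg _ _ _)),
    mul_comm (DD M)]
  exact mul_le_mul_of_nonneg_left (Aint_le_DD h1 h2 _) (by positivity)

lemma rho_nonneg (γ₁ γ₂ : ℝ → M) : 0 ≤ rho γ₁ γ₂ :=
  tsum_nonneg fun _ => mul_nonneg (by positivity) (int_dist_nonneg _)

lemma rho_symm (γ₁ γ₂ : ℝ → M) : rho γ₁ γ₂ = rho γ₂ γ₁ := by
  unfold rho; simp_rw [dist_comm]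

lemma rho_triangle {γ₁ γ₂ γ₃ : ℝ → M} (h1 : Continuous γ₁) (h2 : Continuous γ₂)
    (h3 : Continuous γ₃) : rho γ₁ γ₃ ≤ rho γ₁ γ₂ + rho γ₂ γ₃ := by
  unfold rho
  rw [← Summable.tsum_add (summable_rho h1 h2) (summable_rho h2 h3)]
  apply Summable.tsum_le_tsum _ (summable_rho h1 h3)
    ((summable_rho h1 h2).add (summable_rho h2 h3))
  intro i
  rw [← mul_add]
  apply mul_le_mul_of_nonneg_left _ (by positivity)
  rw [← intervalIntegral.integral_add (intInt h1 h2 _ _) (intInt h2 h3 _ _)]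
  apply intervalIntegral.integral_mono_on (by linarith) (intInt h1 h3 _ _)
    ((intInt h1 h2 _ _).add (intInt h2 h3 _ _))
  exact fun x _ => dist_triangle _ _ _

lemma tsum_shiftA_le {γ₁ γ₂ : ℝ → M} (h1 : Continuous γ₁) (h2 : Continuous γ₂) (m : ℤ) :
    ∑' i : ℤ, (2:ℝ) ^ (-|i|) * Aint γ₁ γ₂ (i + m) ≤ (2:ℝ) ^ |m| * rho γ₁ γ₂ := by
  have hre : ∑' i : ℤ, (2:ℝ) ^ (-|i|) * Aint γ₁ γ₂ (i + m)
      = ∑' j : ℤ, (2:ℝ) ^ (-|j - m|) * Aint γ₁ γ₂ j := by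
    have := Equiv.tsum_eq (Equiv.subRight m) (fun i : ℤ => (2:ℝ) ^ (-|i|) * Aint γ₁ γ₂ (i + m))
    simp only [Equiv.subRight_apply, sub_add_cancel] at this
    exact this.symm
  rw [hre, rho_eq_tsum_Aint, ← tsum_mul_left]
  apply Summable.tsum_le_tsum _ _ _
  · intro j
    rw [← mul_assoc]
    apply mul_le_mul_of_nonneg_right _ (Aint_nonneg _ _ _)
    rw [← zpow_add₀ (two_ne_zero)]
    apply zpow_le_zpow_right₀ one_le_two
    have := abs_sub_abs_le_abs_sub j m
    linarith
  · apply summable_of_le_w ((2:ℝ) ^ |m| * DD M)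
    intro j
    rw [Real.norm_eq_abs, abs_of_nonneg (mul_nonneg (by positivity) (Aint_nonneg _ _ _))]
    calc (2:ℝ) ^ (-|j - m|) * Aint γ₁ γ₂ j
        ≤ ((2:ℝ) ^ (|m| - |j|)) * DD M := by
          apply mul_le_mul (zpow_le_zpow_right₀ one_le_two (by
            have := abs_sub_abs_le_abs_sub j m; linarith)) (Aint_le_DD h1 h2 _)
            (Aint_nonneg _ _ _) (by positivity)
      _ = (2:ℝ) ^ |m| * DD M * (2:ℝ) ^ (-|j|) := by
          rw [zpow_sub₀ two_ne_zero]
          rw [zpow_neg]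
          ring
  · exact (summable_shiftA h1 h2 0).congr (by simp) |>.mul_left _

lemma cont_of_lip {γ : ℝ → M} {L : ℝ} (hL : 0 ≤ L) (h : LipschitzCurve L γ) :
    Continuous γ := by
  apply (LipschitzWith.of_dist_le_mul (K := L.toNNReal) ?_).continuous
  intro s t
  rw [Real.coe_toNNReal L hL, Real.dist_eq]
  exact h s t

lemma rho_shift_le {γ₁ γ₂ : ℝ → M} (h1 : Continuous γ₁) (h2 : Continuous γ₂) (s : ℝ) :
    rho (fun t => γ₁ (t + s)) (fun t => γ₂ (t + s)) ≤ (2:ℝ) ^ (|⌊s⌋| + 2) * rho γ₁ γ₂ := by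
  set k := ⌊s⌋ with hk
  have c1 : Continuous (fun t => γ₁ (t + s)) := h1.comp (continuous_id.add continuous_const)
  have c2 : Continuous (fun t => γ₂ (t + s)) := h2.comp (continuous_id.add continuous_const)
  have hterm : ∀ i : ℤ, (∫ t in (i:ℝ)..((i:ℝ)+1), dist (γ₁ (t + s)) (γ₂ (t + s)))
      ≤ Aint γ₁ γ₂ (i + k) + Aint γ₁ γ₂ (i + k + 1) := by
    intro i
    have e1 : (∫ t in (i:ℝ)..((i:ℝ)+1), dist (γ₁ (t + s)) (γ₂ (t + s)))
        = ∫ t in ((i:ℝ)+s)..((i:ℝ)+1+s), dist (γ₁ t) (γ₂ t) :=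
      intervalIntegral.integral_comp_add_right (fun t => dist (γ₁ t) (γ₂ t)) s
    have e2 : Aint γ₁ γ₂ (i + k) + Aint γ₁ γ₂ (i + k + 1)
        = ∫ t in ((i:ℝ)+(k:ℝ))..((i:ℝ)+(k:ℝ)+2), dist (γ₁ t) (γ₂ t) := by
      unfold Aint
      push_cast
      rw [show (i:ℝ)+(k:ℝ)+2 = ((i:ℝ)+(k:ℝ)+1)+1 by ring]
      exact intervalIntegral.integral_add_adjacent_intervals (intInt h1 h2 _ _) (intInt h1 h2 _ _)
    rw [e1, e2]
    have hks : (k:ℝ) ≤ s := Int.floor_le s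
    have hsk : s ≤ (k:ℝ) + 1 := (Int.lt_floor_add_one s).le
    apply intervalIntegral.integral_mono_interval (by linarith) (by linarith) (by linarith)
      (ae_of_all _ fun x => dist_nonneg) (intInt h1 h2 _ _)
  have S1 := summable_shiftA h1 h2 k
  have S2 := summable_shiftA h1 h2 (k + 1)
  calc rho (fun t => γ₁ (t + s)) (fun t => γ₂ (t + s))
      ≤ ∑' i : ℤ, (2:ℝ) ^ (-|i|) * (Aint γ₁ γ₂ (i + k) + Aint γ₁ γ₂ (i + k + 1)) := by
        apply Summable.tsum_le_tsum _ (summable_rho c1 c2) (by simp_rw [mul_add]; exact S1.add (by simpa [add_assoc] using S2))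
        intro i
        exact mul_le_mul_of_nonneg_left (hterm i) (by positivity)
    _ = (∑' i : ℤ, (2:ℝ) ^ (-|i|) * Aint γ₁ γ₂ (i + k))
        + ∑' i : ℤ, (2:ℝ) ^ (-|i|) * Aint γ₁ γ₂ (i + (k + 1)) := by
        simp_rw [mul_add, add_assoc]
        exact Summable.tsum_add S1 S2
    _ ≤ (2:ℝ) ^ |k| * rho γ₁ γ₂ + (2:ℝ) ^ |k + 1| * rho γ₁ γ₂ :=
        add_le_add (tsum_shiftA_le h1 h2 k) (tsum_shiftA_le h1 h2 (k + 1))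
    _ ≤ (2:ℝ) ^ (|k| + 2) * rho γ₁ γ₂ := by
        rw [← add_mul]
        apply mul_le_mul_of_nonneg_right _ (rho_nonneg _ _)
        have h1' : (2:ℝ) ^ |k + 1| ≤ (2:ℝ) ^ (|k| + 1) :=
          zpow_le_zpow_right₀ one_le_two (by
            have := abs_add_le k 1; simpa using this)
        have e3 : (2:ℝ) ^ (|k| + 1) = 2 * (2:ℝ) ^ |k| := by
          rw [zpow_add₀ two_ne_zero]; ring
        have e4 : (2:ℝ) ^ (|k| + 2) = 4 * (2:ℝ) ^ |k| := by
          rw [zpow_add₀ two_ne_zero]; norm_num; ring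
        have hp : (0:ℝ) < (2:ℝ) ^ |k| := by positivity
        rw [e4]; rw [e3] at h1'; linarith

lemma rho_lip_shift {γ : ℝ → M} {L : ℝ} (hL : 0 ≤ L) (hlip : LipschitzCurve L γ)
    (s s' : ℝ) :
    rho (fun t => γ (t + s)) (fun t => γ (t + s'))
      ≤ (L * |s - s'|) * ∑' i : ℤ, (2:ℝ) ^ (-|i|) := by
  have hc := cont_of_lip hL hlip
  have c1 : Continuous (fun t => γ (t + s)) := hc.comp (continuous_id.add continuous_const)
  have c2 : Continuous (fun t => γ (t + s')) := hc.comp (continuous_id.add continuous_const)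
  rw [← tsum_mul_left]
  apply Summable.tsum_le_tsum _ (summable_rho c1 c2) (summable_w.mul_left _)
  intro i
  rw [mul_comm (L * |s - s'|)]
  apply mul_le_mul_of_nonneg_left _ (by positivity)
  have : ∀ x ∈ Set.Icc (i:ℝ) ((i:ℝ)+1), dist (γ (x + s)) (γ (x + s')) ≤ L * |s - s'| := by
    intro x _
    have := hlip (x + s) (x + s')
    simpa using this
  have hmono := intervalIntegral.integral_mono_on (μ := volume) (by linarith : (i:ℝ) ≤ (i:ℝ)+1)
    ((c1.dist c2).intervalIntegrable _ _)
    (_root_.intervalIntegrable_const (c := L * |s - s'|)) this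
  calc (∫ t in (i:ℝ)..((i:ℝ)+1), dist (γ (t + s)) (γ (t + s')))
      ≤ ∫ _t in (i:ℝ)..((i:ℝ)+1), L * |s - s'| := hmono
    _ = L * |s - s'| := by simp
end

theorem reparametrization_continuous {M : Type*} [MetricSpace M] [CompactSpace M]
    (L : ℝ) (hL : 0 < L) (S : Set (ℝ → M)) (hlipS : ∀ γ ∈ S, LipschitzCurve L γ)
    (τ : (ℝ → M) → ℝ)
    (hτ : ∀ γ ∈ S, ∀ ε > (0 : ℝ), ∃ δ > (0 : ℝ), ∀ γ' ∈ S,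
      rho γ γ' < δ → |τ γ - τ γ'| < ε)
    (γn : ℕ → ℝ → M) (hγn : ∀ n, γn n ∈ S) (γ : ℝ → M) (hγ : γ ∈ S)
    (hconv : Filter.Tendsto (fun n => rho (γn n) γ) Filter.atTop (nhds 0)) :
    Filter.Tendsto
      (fun n => rho (fun t => γn n (t + τ (γn n))) (fun t => γ (t + τ γ)))
      Filter.atTop (nhds 0) := by
  have hcγ : Continuous γ := cont_of_lip hL.le (hlipS γ hγ)
  have hcn : ∀ n, Continuous (γn n) := fun n => cont_of_lip hL.le (hlipS _ (hγn n))
  -- τ (γn n) → τ γ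
  have hτt : Tendsto (fun n => τ (γn n)) atTop (nhds (τ γ)) := by
    rw [Metric.tendsto_atTop]
    intro ε hε
    obtain ⟨δ, hδ, hδ'⟩ := hτ γ hγ ε hε
    have hev : ∀ᶠ n in atTop, rho (γn n) γ < δ := hconv.eventually (gt_mem_nhds hδ)
    obtain ⟨N, hN⟩ := eventually_atTop.1 hev
    exact ⟨N, fun n hn => by
      rw [Real.dist_eq, abs_sub_comm]
      exact hδ' (γn n) (hγn n) ((rho_symm γ (γn n)) ▸ hN n hn)⟩
  set C : ℝ := (2:ℝ) ^ (|⌊τ γ⌋| + 3) with hC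
  set W : ℝ := ∑' i : ℤ, (2:ℝ) ^ (-|i|) with hW
  -- the dominating sequence
  have hg : Tendsto (fun n => C * rho (γn n) γ + (L * W) * |τ (γn n) - τ γ|)
      atTop (nhds 0) := by
    have h1 : Tendsto (fun n => C * rho (γn n) γ) atTop (nhds 0) := by
      simpa using hconv.const_mul C
    have h2 : Tendsto (fun n => |τ (γn n) - τ γ|) atTop (nhds 0) := by
      have := (hτt.sub (tendsto_const_nhds (x := τ γ))).abs
      simpa using this
    have h3 : Tendsto (fun n => (L * W) * |τ (γn n) - τ γ|) atTop (nhds 0) := by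
      simpa using h2.const_mul (L * W)
    simpa using h1.add h3
  apply squeeze_zero' (Eventually.of_forall fun n => rho_nonneg _ _) _ hg
  -- eventual bound
  have hev1 : ∀ᶠ n in atTop, |τ (γn n) - τ γ| ≤ 1 := by
    have := hτt.eventually (Metric.ball_mem_nhds (τ γ) one_pos)
    filter_upwards [this] with n hn
    rw [Real.dist_eq] at hn
    exact hn.le
  filter_upwards [hev1] with n hn
  set s := τ (γn n) with hs
  have hk : |⌊s⌋| + 2 ≤ |⌊τ γ⌋| + 3 := by
    have h1 : ⌊s⌋ ≤ ⌊τ γ⌋ + 1 := by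
      have : s ≤ τ γ + 1 := by
        have := abs_le.1 hn; linarith [this.2]
      calc ⌊s⌋ ≤ ⌊τ γ + 1⌋ := Int.floor_le_floor this
        _ = ⌊τ γ⌋ + 1 := by exact_mod_cast Int.floor_add_intCast (τ γ) 1
    have h2 : ⌊τ γ⌋ - 1 ≤ ⌊s⌋ := by
      have : τ γ - 1 ≤ s := by
        have := abs_le.1 hn; linarith [this.1]
      calc ⌊τ γ⌋ - 1 = ⌊τ γ + (-1 : ℤ)⌋ := by
            rw [Int.floor_add_intCast]; push_cast; ring
        _ ≤ ⌊s⌋ := Int.floor_le_floor (by push_cast; linarith)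
    have ha1 := le_abs_self ⌊τ γ⌋
    have ha2 := neg_abs_le ⌊τ γ⌋
    have : |⌊s⌋| ≤ |⌊τ γ⌋| + 1 := abs_le.2 ⟨by omega, by omega⟩
    omega
  calc rho (fun t => γn n (t + s)) (fun t => γ (t + τ γ))
      ≤ rho (fun t => γn n (t + s)) (fun t => γ (t + s))
        + rho (fun t => γ (t + s)) (fun t => γ (t + τ γ)) :=
        rho_triangle ((hcn n).comp (continuous_id.add continuous_const))
          (hcγ.comp (continuous_id.add continuous_const))
          (hcγ.comp (continuous_id.add continuous_const))
    _ ≤ (2:ℝ) ^ (|⌊s⌋| + 2) * rho (γn n) γ + (L * |s - τ γ|) * W :=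
        add_le_add (rho_shift_le (hcn n) hcγ s) (rho_lip_shift hL.le (hlipS γ hγ) s (τ γ))
    _ ≤ C * rho (γn n) γ + (L * W) * |s - τ γ| := by
        apply add_le_add
        · exact mul_le_mul_of_nonneg_right
            (zpow_le_zpow_right₀ one_le_two hk) (rho_nonneg _ _)
        · ring_nf; exact le_refl _
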